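/- Let λ ∈ ℂ and let Ŝ ∈ Ĝ be parabolic with spectrum σ(Ŝ) = {λ}. Then |λ| = 1, and there exist R̂ ∈ Ĝ, a' ∈ H orthogonal to e, and s ∈ ℂ with s ≠ 0 and Re s = (1/2)‖a'‖², such that R̂ ∘ Ŝ ∘ R̂⁻¹ is the Heisenberg translation (λ, a', s). -/

import Mathlib

noncomputable section

variable {H : Type*} [NormedAddCommGroup H] [InnerProductSpace ℂ H] [CompleteSpace H]

/-- The Hermitian form `Â((x,z),(y,w)) = -z·conj⟨y,e⟩ - ⟨x,e⟩·conj w + ⟨x',y'⟩`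
(paper convention: linear in the first argument, with `⟨a,b⟩ = inner b a` in Mathlib,
and `x' = x - ⟨x,e⟩e`). -/
def hatA (e : H) (u v : H × ℂ) : ℂ :=
  - u.2 * (inner ℂ v.1 e : ℂ) - (inner ℂ e u.1 : ℂ) * (starRingEnd ℂ) v.2
    + (inner ℂ (v.1 - (inner ℂ e v.1 : ℂ) • e) (u.1 - (inner ℂ e u.1 : ℂ) • e) : ℂ)

/-- Membership in the group `Ĝ` of bounded bijective linear maps preserving `Â`. -/
def memGhat (e : H) (T : (H × ℂ) →L[ℂ] (H × ℂ)) : Prop :=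
  Function.Bijective T ∧ ∀ u v : H × ℂ, hatA e (T u) (T v) = hatA e u v

/-- `T` is the Heisenberg translation `(λ, a', s)`: an element of `Ĝ` sending
`(x,z)` to `λ·((⟨x,e⟩ + ⟨x',a'⟩ + s·z)·e + x' + z·a', z)`, where `|λ| = 1`,
`a' ⊥ e`, `s ≠ 0` and `Re s = ‖a'‖²/2`. -/
def IsHeisenberg (e : H) (T : (H × ℂ) →L[ℂ] (H × ℂ)) (lam : ℂ) (a' : H) (s : ℂ) :
    Prop :=
  ‖lam‖ = 1 ∧ a' ∈ (ℂ ∙ e)ᗮ ∧ s ≠ 0 ∧ s.re = (1 / 2) * ‖a'‖ ^ 2 ∧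
  memGhat e T ∧
  ∀ (x : H) (z : ℂ),
    T (x, z) = lam •
      (((((inner ℂ e x : ℂ) + (inner ℂ a' (x - (inner ℂ e x : ℂ) • e) : ℂ) + s * z) • e
          + (x - (inner ℂ e x : ℂ) • e) + z • a', z)) : H × ℂ)

/-- An element of `Ĝ` is parabolic: no time-like eigenvector, and exactly one
eigenline spanned by a light-like vector. -/
def IsParabolicGhat (e : H) (T : (H × ℂ) →L[ℂ] (H × ℂ)) : Prop :=
  (¬ ∃ v : H × ℂ, v ≠ 0 ∧ (∃ μ : ℂ, T v = μ • v) ∧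
      ∃ c : ℝ, c < 0 ∧ hatA e v v = (c : ℂ)) ∧
  (∃ v : H × ℂ, v ≠ 0 ∧ (∃ μ : ℂ, T v = μ • v) ∧ hatA e v v = 0 ∧
      ∀ w : H × ℂ, w ≠ 0 → (∃ μ : ℂ, T w = μ • w) → hatA e w w = 0 →
        ∃ c : ℂ, w = c • v)

end

set_option linter.unusedSectionVars false
set_option maxHeartbeats 1000000

noncomputable section Infra

open ContinuousLinearMap

variable {H : Type*} [NormedAddCommGroup H] [InnerProductSpace ℂ H] [CompleteSpace H]

local notation "⟪" x ", " y "⟫" => (inner ℂ x y : ℂ)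

lemma inner_ee {e : H} (he : ‖e‖ = 1) : ⟪e, e⟫ = 1 := by
  rw [inner_self_eq_norm_sq_to_K, he]; norm_num

lemma hatA_smul_left (e : H) (c : ℂ) (u v : H × ℂ) :
    hatA e (c • u) v = c * hatA e u v := by
  simp only [hatA, Prod.smul_fst, Prod.smul_snd, smul_eq_mul, inner_smul_left,
    inner_smul_right, inner_sub_right]
  simp only [inner_sub_left, inner_smul_left, inner_smul_right]
  ring_nf

lemma hatA_smul_right (e : H) (c : ℂ) (u v : H × ℂ) :
    hatA e u (c • v) = (starRingEnd ℂ) c * hatA e u v := by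
  simp only [hatA, Prod.smul_fst, Prod.smul_snd, smul_eq_mul, inner_smul_left,
    inner_smul_right, inner_sub_right, inner_sub_left, map_mul]
  ring_nf

lemma memGhat_comp {e : H} {T S : (H × ℂ) →L[ℂ] (H × ℂ)} (hT : memGhat e T)
    (hS : memGhat e S) : memGhat e (T ∘L S) := by
  refine ⟨?_, fun u v => ?_⟩
  · exact hT.1.comp hS.1
  · simp only [ContinuousLinearMap.comp_apply]
    rw [hT.2, hS.2]

lemma memGhat_symm {e : H} (R : (H × ℂ) ≃L[ℂ] (H × ℂ))
    (hR : memGhat e (R : (H × ℂ) →L[ℂ] (H × ℂ))) :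
    memGhat e (R.symm : (H × ℂ) →L[ℂ] (H × ℂ)) := by
  refine ⟨R.symm.bijective, fun u v => ?_⟩
  have := hR.2 (R.symm u) (R.symm v)
  simpa using this.symm


/-- Heisenberg-type translation as a continuous linear map:
`(x, z) ↦ (x + (⟪a,x⟫ + s z) • e + z • a, z)`. -/
def transL (e a : H) (s : ℂ) : (H × ℂ) →L[ℂ] (H × ℂ) :=
  (ContinuousLinearMap.fst ℂ H ℂ
    + (ContinuousLinearMap.toSpanSingleton ℂ e).comp
        ((innerSL ℂ a).comp (ContinuousLinearMap.fst ℂ H ℂ)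
          + s • ContinuousLinearMap.snd ℂ H ℂ)
    + (ContinuousLinearMap.toSpanSingleton ℂ a).comp
        (ContinuousLinearMap.snd ℂ H ℂ)).prod
    (ContinuousLinearMap.snd ℂ H ℂ)

lemma transL_apply (e a : H) (s : ℂ) (x : H) (z : ℂ) :
    transL e a s (x, z) = (x + (⟪a, x⟫ + s * z) • e + z • a, z) := by
  simp [transL, toSpanSingleton_apply, add_smul, smul_smul]

/-- The inversion `(x,z) ↦ (x + (z - ⟪e,x⟫) • e, ⟪e,x⟫)`. -/
def iotaL (e : H) : (H × ℂ) →L[ℂ] (H × ℂ) :=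
  (ContinuousLinearMap.fst ℂ H ℂ
    + (ContinuousLinearMap.toSpanSingleton ℂ e).comp
        (ContinuousLinearMap.snd ℂ H ℂ
          - (innerSL ℂ e).comp (ContinuousLinearMap.fst ℂ H ℂ))).prod
    ((innerSL ℂ e).comp (ContinuousLinearMap.fst ℂ H ℂ))

lemma iotaL_apply (e : H) (x : H) (z : ℂ) :
    iotaL e (x, z) = (x + (z - ⟪e, x⟫) • e, ⟪e, x⟫) := by
  simp [iotaL, toSpanSingleton_apply, sub_smul]

/-- The translation as a continuous linear equivalence. -/
def transE (e a : H) (s : ℂ) (he : ‖e‖ = 1) (ha : ⟪e, a⟫ = 0)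
    (hs : s + (starRingEnd ℂ) s = ⟪a, a⟫) : (H × ℂ) ≃L[ℂ] (H × ℂ) :=
  ContinuousLinearEquiv.equivOfInverse (transL e a s) (transL e (-a) ((starRingEnd ℂ) s))
    (by
      rintro ⟨x, z⟩
      have hae : ⟪a, e⟫ = 0 := by rw [← inner_conj_symm, ha, map_zero]
      simp only [transL_apply, inner_add_right, inner_smul_right, inner_neg_left,
        inner_neg_right, inner_ee he, ha, hae, Prod.mk.injEq]
      constructor
      · match_scalars <;> simp <;> linear_combination z * hs + z * inner_self_eq_norm_sq_to_K (𝕜 := ℂ) a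
      · trivial)
    (by
      rintro ⟨x, z⟩
      have hae : ⟪a, e⟫ = 0 := by rw [← inner_conj_symm, ha, map_zero]
      simp only [transL_apply, inner_add_right, inner_smul_right, inner_neg_left,
        inner_neg_right, inner_ee he, ha, hae, Prod.mk.injEq, inner_neg_neg]
      constructor
      · match_scalars <;> simp <;> linear_combination z * hs + z * inner_self_eq_norm_sq_to_K (𝕜 := ℂ) a
      · trivial)

lemma transE_coe (e a : H) (s : ℂ) (he ha hs) :
    (transE (H := H) e a s he ha hs : (H × ℂ) →L[ℂ] (H × ℂ)) = transL e a s := rfl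

/-- The inversion as a continuous linear equivalence. -/
def iotaE (e : H) (he : ‖e‖ = 1) : (H × ℂ) ≃L[ℂ] (H × ℂ) :=
  ContinuousLinearEquiv.equivOfInverse (iotaL e) (iotaL e)
    (by
      rintro ⟨x, z⟩
      simp only [iotaL_apply, inner_add_right, inner_smul_right, inner_ee he, Prod.mk.injEq]
      constructor
      · match_scalars <;> simp <;> ring
      · ring)
    (by
      rintro ⟨x, z⟩
      simp only [iotaL_apply, inner_add_right, inner_smul_right, inner_ee he, Prod.mk.injEq]
      constructor
      · match_scalars <;> simp <;> ring
      · ring)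

lemma iotaE_coe (e : H) (he) : (iotaE (H := H) e he : (H × ℂ) →L[ℂ] (H × ℂ)) = iotaL e := rfl

lemma memGhat_transL (e a : H) (s : ℂ) (he : ‖e‖ = 1) (ha : ⟪e, a⟫ = 0)
    (hs : s + (starRingEnd ℂ) s = ⟪a, a⟫) : memGhat e (transL e a s) := by
  have hae : ⟪a, e⟫ = 0 := by rw [← inner_conj_symm, ha, map_zero]
  refine ⟨(transE e a s he ha hs).bijective, ?_⟩
  rintro ⟨x, z⟩ ⟨y, w⟩
  simp only [hatA, transL_apply, inner_add_right, inner_add_left, inner_smul_right,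
    inner_smul_left, inner_sub_left, inner_sub_right, inner_ee he, ha, hae, map_add, map_mul]
  simp only [inner_conj_symm]
  ring_nf
  linear_combination (-z * (starRingEnd ℂ) w) * hs

lemma memGhat_iotaL (e : H) (he : ‖e‖ = 1) : memGhat e (iotaL e) := by
  refine ⟨(iotaE e he).bijective, ?_⟩
  rintro ⟨x, z⟩ ⟨y, w⟩
  simp only [hatA, iotaL_apply, inner_add_right, inner_add_left, inner_smul_right,
    inner_smul_left, inner_sub_left, inner_sub_right, inner_ee he, map_add, map_mul, map_sub]
  simp only [inner_conj_symm]
  ring_nf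


/-- `y ↦ y - ⟪e,y⟫ • e`. -/
def prjL (e : H) : H →L[ℂ] H :=
  ContinuousLinearMap.id ℂ H - (ContinuousLinearMap.toSpanSingleton ℂ e).comp (innerSL ℂ e)

lemma prjL_apply (e y : H) : prjL e y = y - ⟪e, y⟫ • e := by
  simp [prjL, toSpanSingleton_apply]

lemma prjL_mem {e : H} (he : ‖e‖ = 1) (y : H) : prjL e y ∈ (ℂ ∙ e)ᗮ := by
  rw [Submodule.mem_orthogonal_singleton_iff_inner_right, prjL_apply, inner_sub_right,
    inner_smul_right, inner_ee he]
  ring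

lemma prjL_eq_self {e y : H} (hy : y ∈ (ℂ ∙ e)ᗮ) : prjL e y = y := by
  rw [Submodule.mem_orthogonal_singleton_iff_inner_right] at hy
  rw [prjL_apply, hy]; simp

lemma prjL_decomp (e y : H) : y = ⟪e, y⟫ • e + prjL e y := by
  rw [prjL_apply]; abel

lemma prjL_e {e : H} (he : ‖e‖ = 1) : prjL e e = 0 := by
  rw [prjL_apply, inner_ee he]; simp

lemma norm_prjL_le {e : H} (he : ‖e‖ = 1) (y : H) : ‖prjL e y‖ ≤ ‖y‖ := by
  have hdec := prjL_decomp e y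
  have horth : ⟪(⟪e, y⟫ • e), prjL e y⟫ = 0 := by
    rw [inner_smul_left]
    have := prjL_mem he y
    rw [Submodule.mem_orthogonal_singleton_iff_inner_right] at this
    rw [this, mul_zero]
  have hsq : ‖y‖ ^ 2 = ‖⟪e, y⟫ • e‖ ^ 2 + ‖prjL e y‖ ^ 2 := by
    conv_lhs => rw [hdec]
    rw [norm_add_sq (𝕜 := ℂ), horth]
    simp
  nlinarith [norm_nonneg (prjL e y), norm_nonneg y, norm_nonneg (⟪e, y⟫ • e)]

end Infra

noncomputable section Key

open ContinuousLinearMap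

variable {H : Type*} [NormedAddCommGroup H] [InnerProductSpace ℂ H] [CompleteSpace H]

local notation "⟪" x ", " y "⟫" => (inner ℂ x y : ℂ)

lemma inner_e_of_mem {e p : H} (hp : p ∈ (ℂ ∙ e)ᗮ) : ⟪e, p⟫ = 0 :=
  (Submodule.mem_orthogonal_singleton_iff_inner_right).1 hp

lemma inner_of_mem_e {e p : H} (hp : p ∈ (ℂ ∙ e)ᗮ) : ⟪p, e⟫ = 0 := by
  rw [← inner_conj_symm, inner_e_of_mem hp, map_zero]

/-- The master computation of `hatA` on vectors decomposed along `e` and `(ℂ ∙ e)ᗮ`. -/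
lemma hatA_pair {e : H} (he : ‖e‖ = 1) {p r : H} (hp : p ∈ (ℂ ∙ e)ᗮ) (hr : r ∈ (ℂ ∙ e)ᗮ)
    (cp cr zp zr : ℂ) :
    hatA e (cp • e + p, zp) (cr • e + r, zr)
      = -zp * (starRingEnd ℂ) cr - cp * (starRingEnd ℂ) zr + ⟪r, p⟫ := by
  simp only [hatA, inner_add_right, inner_add_left, inner_smul_right, inner_smul_left,
    inner_ee he, inner_e_of_mem hp, inner_e_of_mem hr, inner_of_mem_e hp, inner_of_mem_e hr,
    inner_sub_left, inner_sub_right, inner_conj_symm]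
  ring_nf

lemma hatA_e0 {e : H} (he : ‖e‖ = 1) (w : H × ℂ) :
    hatA e (e, 0) w = -(starRingEnd ℂ) w.2 := by
  simp [hatA, inner_ee he, he]

/-- The compression of `T` to `(ℂ ∙ e)ᗮ`. -/
def Uof (e : H) (he : ‖e‖ = 1) (T : (H × ℂ) →L[ℂ] (H × ℂ)) :
    ((ℂ ∙ e)ᗮ : Submodule ℂ H) →L[ℂ] ((ℂ ∙ e)ᗮ : Submodule ℂ H) :=
  ContinuousLinearMap.codRestrict
    ((prjL e).comp ((ContinuousLinearMap.fst ℂ H ℂ).comp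
      (T.comp ((ContinuousLinearMap.inl ℂ H ℂ).comp (Submodule.subtypeL _)))))
    _ (fun _ => prjL_mem he _)

lemma Uof_coe (e : H) (he : ‖e‖ = 1) (T : (H × ℂ) →L[ℂ] (H × ℂ))
    (x : ((ℂ ∙ e)ᗮ : Submodule ℂ H)) :
    ((Uof e he T) x : H) = prjL e ((T ((x : H), 0)).1) := rfl

lemma key (e : H) (he : ‖e‖ = 1) (lam : ℂ) (T : (H × ℂ) →L[ℂ] (H × ℂ))
    (hT : memGhat e T) (hspec : spectrum ℂ T = {lam})
    (hev : T (e, 0) = lam • ((e, 0) : H × ℂ)) :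
    ‖lam‖ = 1 ∧ ∃ (a : H) (s : ℂ), a ∈ (ℂ ∙ e)ᗮ ∧ s.re = (1 / 2) * ‖a‖ ^ 2 ∧
      ∀ (x : H) (z : ℂ), T (x, z) = lam •
        ((((⟪e, x⟫ + ⟪a, x - ⟪e, x⟫ • e⟫ + s * z) • e
          + (x - ⟪e, x⟫ • e) + z • a, z) : H × ℂ)) := by
  have he0 : e ≠ 0 := by intro h; rw [h, norm_zero] at he; norm_num at he
  -- λ ≠ 0
  have hlam0 : lam ≠ 0 := by
    intro h
    apply he0
    have h1 : T (e, 0) = T 0 := by rw [hev, h, zero_smul, map_zero]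
    have h2 := hT.1.injective h1
    exact (Prod.ext_iff.mp h2).1
  -- second component rule with ν
  have hsnd0 : ∀ u : H × ℂ, lam * (starRingEnd ℂ) ((T u).2) = (starRingEnd ℂ) u.2 := by
    intro u
    have h := hT.2 (e, 0) u
    rw [hev, hatA_smul_left, hatA_e0 he, hatA_e0 he] at h
    have : lam * -(starRingEnd ℂ) (T u).2 = -(starRingEnd ℂ) u.2 := h
    linear_combination -this
  have hclam0 : (starRingEnd ℂ) lam ≠ 0 := by
    simpa using hlam0
  have hsnd1 : ∀ u : H × ℂ, (T u).2 = ((starRingEnd ℂ) lam)⁻¹ * u.2 := by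
    intro u
    have h := congrArg (starRingEnd ℂ) (hsnd0 u)
    simp only [map_mul, Complex.conj_conj] at h
    field_simp
    linear_combination h
  -- ν is in the spectrum, hence equals lam
  have hν : ((starRingEnd ℂ) lam)⁻¹ ∈ spectrum ℂ T := by
    rw [spectrum.mem_iff]
    intro hunit
    rw [ContinuousLinearMap.isUnit_iff_bijective] at hunit
    obtain ⟨u, hu⟩ := hunit.surjective ((0 : H), (1 : ℂ))
    have h2 := congrArg Prod.snd hu
    simp only [ContinuousLinearMap.sub_apply, Algebra.algebraMap_eq_smul_one,
      ContinuousLinearMap.smul_apply, ContinuousLinearMap.one_apply, Prod.snd_sub,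
      Prod.smul_snd, smul_eq_mul] at h2
    rw [hsnd1 u] at h2
    simp at h2
  have hνlam : ((starRingEnd ℂ) lam)⁻¹ = lam := by
    rw [hspec] at hν; exact hν
  have hll : lam * (starRingEnd ℂ) lam = 1 := by
    field_simp at hνlam
    linear_combination -hνlam
  have hnorm : ‖lam‖ = 1 := by
    have h1 : Complex.normSq lam = 1 := by
      have := Complex.mul_conj lam
      rw [hll] at this
      exact_mod_cast this.symm
    have h2 : ‖lam‖ ^ 2 = 1 := by
      rw [Complex.sq_norm, h1]
    nlinarith [norm_nonneg lam]
  have hsnd : ∀ u : H × ℂ, (T u).2 = lam * u.2 := by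
    intro u; rw [hsnd1 u, hνlam]
  -- the compression to (ℂ ∙ e)ᗮ
  set K : Submodule ℂ H := (ℂ ∙ e)ᗮ with hK
  set U := Uof e he T with hU
  set q : H → ℂ := fun y => ⟪e, (T (y, 0)).1⟫ with hq
  have hTU : ∀ x : K, T ((x : H), 0) = (q (x : H) • e + ((U x : H)), 0) := by
    intro x
    have h2 : (T ((x : H), 0)).2 = 0 := by rw [hsnd]; ring
    have h1 : (T ((x : H), 0)).1 = q (x : H) • e + ((U x : H)) := by
      rw [Uof_coe]
      exact prjL_decomp e _
    exact Prod.ext h1 h2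
  have hUinner : ∀ x y : K, ⟪((U y : H)), ((U x : H))⟫ = ⟪(y : H), (x : H)⟫ := by
    intro x y
    have h := hT.2 ((x : H), 0) ((y : H), 0)
    rw [hTU x, hTU y] at h
    rw [hatA_pair he (U x).2 (U y).2] at h
    have hx0 : ((x : H), (0 : ℂ)) = ((0 : ℂ) • e + (x : H), (0 : ℂ)) := by simp
    have hy0 : ((y : H), (0 : ℂ)) = ((0 : ℂ) • e + (y : H), (0 : ℂ)) := by simp
    rw [hx0, hy0, hatA_pair he x.2 y.2] at h
    simpa using h
  -- surjectivity of U
  have hTe : LinearMap.ker (T : (H × ℂ) →ₗ[ℂ] (H × ℂ)) = ⊥ := by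
    rw [LinearMap.ker_eq_bot]; exact hT.1.injective
  have hTr : LinearMap.range (T : (H × ℂ) →ₗ[ℂ] (H × ℂ)) = ⊤ := by
    rw [LinearMap.range_eq_top]; exact hT.1.surjective
  have hUsurj : Function.Surjective U := by
    intro x
    set y := (ContinuousLinearEquiv.ofBijective T hTe hTr).symm ((x : H), 0) with hy
    have hTy : T y = ((x : H), 0) :=
      ContinuousLinearEquiv.ofBijective_apply_symm_apply T hTe hTr _
    have hy2 : y.2 = 0 := by
      have := hsnd y
      rw [hTy] at this
      simp only at this
      field_simp at this
      exact (mul_eq_zero.mp this.symm).resolve_left hlam0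
    have hyy : y = (y.1, 0) := by rw [← hy2]
    set p := prjL e y.1 with hp
    have hpmem : p ∈ K := prjL_mem he _
    have hsplit : (y.1, (0:ℂ)) = ⟪e, y.1⟫ • ((e, 0) : H × ℂ) + ((p, 0) : H × ℂ) := by
      have := prjL_decomp e y.1
      rw [Prod.smul_mk]
      rw [Prod.mk_add_mk]
      refine Prod.ext ?_ (by simp)
      simpa using this
    have hTy2 : ((x : H), (0:ℂ)) = ⟪e, y.1⟫ • (lam • ((e, 0) : H × ℂ)) + (q p • e + ((U ⟨p, hpmem⟩ : H)), 0) := by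
      rw [← hTU ⟨p, hpmem⟩, ← hev, ← map_smul, ← map_add, ← hsplit, ← hyy, hTy]
    refine ⟨⟨p, hpmem⟩, ?_⟩
    apply Subtype.coe_injective
    have h1 := congrArg Prod.fst hTy2
    simp only [Prod.smul_fst, Prod.fst_add, smul_smul] at h1
    have h2 := congrArg (prjL e) h1
    rw [map_add, map_add] at h2
    simp only [map_smul] at h2
    rw [prjL_e he] at h2
    rw [prjL_eq_self x.2] at h2
    rw [prjL_eq_self (U ⟨p, hpmem⟩).2] at h2
    simpa using h2.symm
  -- U is unitary
  have hadj : (ContinuousLinearMap.adjoint U) ∘L U = ContinuousLinearMap.id ℂ K := by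
    refine ContinuousLinearMap.ext fun x => ?_
    apply ext_inner_left ℂ
    intro v
    rw [ContinuousLinearMap.comp_apply, ContinuousLinearMap.adjoint_inner_right]
    rw [Submodule.coe_inner, Submodule.coe_inner, hUinner x v]
    rfl
  have hadj' : U ∘L (ContinuousLinearMap.adjoint U) = ContinuousLinearMap.id ℂ K := by
    refine ContinuousLinearMap.ext fun x => ?_
    obtain ⟨w, rfl⟩ := hUsurj x
    have := congrArg U (congrFun (congrArg DFunLike.coe hadj) w)
    exact this
  -- quasinilpotency transfers to the compression
  set A : (H × ℂ) →L[ℂ] (H × ℂ) := T - algebraMap ℂ _ lam with hA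
  set B : K →L[ℂ] K := U - algebraMap ℂ _ lam with hB
  have hAap : ∀ u : H × ℂ, A u = T u - lam • u := by
    intro u
    simp [hA, Algebra.algebraMap_eq_smul_one]
  have hBap : ∀ x : K, B x = U x - lam • x := by
    intro x
    simp [hB, Algebra.algebraMap_eq_smul_one]
  have hind : ∀ n : ℕ, ∀ x : K, ((A ^ n) ((x : H), 0)).2 = 0 ∧
      prjL e (((A ^ n) ((x : H), 0)).1) = (((B ^ n) x : K) : H) := by
    intro n
    induction n with
    | zero =>
      intro x
      constructor
      · simp
      · simp only [pow_zero, ContinuousLinearMap.one_apply]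
        exact prjL_eq_self x.2
    | succ n ih =>
      intro x
      obtain ⟨ih2, ih1⟩ := ih x
      set u := (A ^ n) ((x : H), 0) with hu
      set k := (B ^ n) x with hk
      set c0 := ⟪e, u.1⟫ with hc0
      have hu1 : u = (c0 • e + (k : H), 0) := by
        refine Prod.ext ?_ ih2
        calc u.1 = c0 • e + prjL e u.1 := prjL_decomp e u.1
        _ = c0 • e + (k : H) := by rw [ih1]
      have hstep : (A ^ (n + 1)) ((x : H), 0) = A ((c0 • e + (k : H), 0) : H × ℂ) := by
        rw [pow_succ', ContinuousLinearMap.mul_apply, ← hu, ← hu1]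
      have hTku : T ((c0 • e + (k : H), 0) : H × ℂ)
          = c0 • (lam • ((e, 0) : H × ℂ)) + (q (k : H) • e + ((U k : H)), 0) := by
        have hsplit : ((c0 • e + (k : H), 0) : H × ℂ)
            = c0 • ((e, 0) : H × ℂ) + (((k : H), 0) : H × ℂ) := by
          refine Prod.ext (by simp) (by simp)
        rw [hsplit, map_add, map_smul, hev, hTU k]
      have hAku : A ((c0 • e + (k : H), 0) : H × ℂ)
          = ((c0 * lam) • e + (q (k : H) • e + ((U k : H))) - lam • (c0 • e + (k : H)), 0) := by
        rw [hAap, hTku]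
        refine Prod.ext ?_ (by simp)
        simp [smul_smul]
      have hBstep : (B ^ (n + 1)) x = B k := by
        rw [pow_succ', ContinuousLinearMap.mul_apply]
      rw [hstep, hAku, hBstep]
      refine ⟨rfl, ?_⟩
      rw [hBap]
      simp only [map_sub, map_add, map_smul, prjL_e he, prjL_eq_self (U k).2,
        prjL_eq_self k.2, smul_zero, zero_add, add_zero, AddSubgroupClass.coe_sub,
        SetLike.val_smul]
  have hBA : ∀ n : ℕ, ‖B ^ n‖ ≤ ‖A ^ n‖ := by
    intro n
    refine ContinuousLinearMap.opNorm_le_bound _ (norm_nonneg (A ^ n)) fun x => ?_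
    obtain ⟨h2, h1⟩ := hind n x
    calc ‖(B ^ n) x‖ = ‖(((B ^ n) x : K) : H)‖ := rfl
    _ = ‖prjL e (((A ^ n) ((x : H), 0)).1)‖ := by rw [h1]
    _ ≤ ‖((A ^ n) ((x : H), 0)).1‖ := norm_prjL_le he _
    _ ≤ ‖(A ^ n) ((x : H), 0)‖ := norm_fst_le _
    _ ≤ ‖A ^ n‖ * ‖(((x : H), 0) : H × ℂ)‖ := ContinuousLinearMap.le_opNorm _ _
    _ = ‖A ^ n‖ * ‖x‖ := by
      congr 1
      rw [Prod.norm_def]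
      simp [norm_nonneg]
  have hspecA : spectrum ℂ A = {0} := by
    rw [hA, ← spectrum.sub_singleton_eq, hspec, Set.singleton_sub_singleton, sub_self]
  have hrA : spectralRadius ℂ A = 0 := by
    simp [spectralRadius, hspecA]
  have hrB : spectralRadius ℂ B = 0 := by
    refine le_antisymm ?_ (by simp)
    calc spectralRadius ℂ B
        ≤ Filter.atTop.liminf fun n : ℕ => (‖B ^ n‖₊ : ENNReal) ^ (1 / n : ℝ) :=
          spectrum.spectralRadius_le_liminf_pow_nnnorm_pow_one_div ℂ B
    _ ≤ Filter.atTop.liminf fun n : ℕ => (‖A ^ n‖₊ : ENNReal) ^ (1 / n : ℝ) := by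
        refine Filter.liminf_le_liminf (Filter.Eventually.of_forall fun n => ?_)
        have hc : (‖B ^ n‖₊ : ENNReal) ≤ (‖A ^ n‖₊ : ENNReal) := by
          exact_mod_cast hBA n
        exact ENNReal.rpow_le_rpow hc (by positivity)
    _ = spectralRadius ℂ A :=
        (spectrum.pow_nnnorm_pow_one_div_tendsto_nhds_spectralRadius A).liminf_eq
    _ = 0 := hrA
  -- B is normal, hence zero
  have h1 : star U * U = 1 := by
    rw [ContinuousLinearMap.star_eq_adjoint, ContinuousLinearMap.mul_def, hadj,
      ContinuousLinearMap.one_def]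
  have h2 : U * star U = 1 := by
    rw [ContinuousLinearMap.star_eq_adjoint, ContinuousLinearMap.mul_def, hadj',
      ContinuousLinearMap.one_def]
  have hBnormal : IsStarNormal B := by
    constructor
    have c1 : Commute (star U) U := by
      show star U * U = U * star U
      rw [h1, h2]
    have c2 : Commute (star U) (algebraMap ℂ (K →L[ℂ] K) lam) :=
      Algebra.commute_algebraMap_right lam (star U)
    have hsc : star (algebraMap ℂ (K →L[ℂ] K) lam)
        = algebraMap ℂ (K →L[ℂ] K) ((starRingEnd ℂ) lam) := by
      rw [Algebra.algebraMap_eq_smul_one, Algebra.algebraMap_eq_smul_one, star_smul]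
      congr 1
      rw [ContinuousLinearMap.star_eq_adjoint, ContinuousLinearMap.one_def]
      exact ContinuousLinearMap.adjoint_id
    have c3 : Commute (star (algebraMap ℂ (K →L[ℂ] K) lam)) U := by
      rw [hsc]
      exact Algebra.commute_algebraMap_left _ U
    have c4 : Commute (star (algebraMap ℂ (K →L[ℂ] K) lam)) (algebraMap ℂ (K →L[ℂ] K) lam) := by
      rw [hsc]
      exact Algebra.commute_algebraMap_left _ _
    have hsB : star B = star U - star (algebraMap ℂ (K →L[ℂ] K) lam) := by
      rw [hB]
      exact star_sub U _
    show Commute (star B) B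
    rw [hsB, hB]
    exact (c1.sub_right c2).sub_left (c3.sub_right c4)
  have hBnn : B = 0 := by
    have h := IsStarNormal.spectralRadius_eq_nnnorm B
    rw [hrB] at h
    have h0 : ‖B‖₊ = 0 := by exact_mod_cast h.symm
    have h0r : ‖B‖ = 0 := by
      have := congrArg (fun t : NNReal => (t : ℝ)) h0
      simpa using this
    exact (ContinuousLinearMap.opNorm_zero_iff B).mp h0r
  have hUlam : ∀ x : K, (U x : H) = lam • (x : H) := by
    intro x
    have hBx : B x = 0 := by rw [hBnn]; rfl
    rw [hBap] at hBx
    have := sub_eq_zero.mp hBx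
    calc (U x : H) = ((lam • x : K) : H) := by rw [this]
    _ = lam • (x : H) := rfl
  have hTp : ∀ (p : H) (hp : p ∈ K), T (p, 0) = (q p • e + lam • p, 0) := by
    intro p hp
    have := hTU ⟨p, hp⟩
    rw [hUlam ⟨p, hp⟩] at this
    exact this
  -- analysis of T (0, 1)
  set y1 := (T ((0 : H), 1)).1 with hy1
  set b : ℂ := ⟪e, y1⟫ with hb
  set a1 := prjL e y1 with ha1
  have ha1m : a1 ∈ K := prjL_mem he _
  have hT01 : T ((0 : H), 1) = (b • e + a1, lam) := by
    refine Prod.ext (prjL_decomp e y1) ?_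
    rw [hsnd]
    simp
  set s : ℂ := (starRingEnd ℂ) lam * b with hs
  set a2 : H := (starRingEnd ℂ) lam • a1 with ha2
  have ha2m : a2 ∈ K := K.smul_mem _ ha1m
  have h00 : (((0:H), (1:ℂ)) : H × ℂ) = ((0:ℂ) • e + (0:H), 1) := by simp
  have hpair0 : hatA e ((0:H), 1) ((0:H), 1) = 0 := by
    rw [h00, hatA_pair he K.zero_mem K.zero_mem]
    simp
  have hself := hT.2 ((0:H), 1) ((0:H), 1)
  rw [hpair0, hT01, hatA_pair he ha1m ha1m] at hself
  have hsum : s + (starRingEnd ℂ) s = ⟪a1, a1⟫ := by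
    rw [hs]
    simp only [map_mul, Complex.conj_conj]
    linear_combination -hself
  have hsre : s.re = (1 / 2) * ‖a2‖ ^ 2 := by
    have h1 : ((2 * s.re : ℝ) : ℂ) = ⟪a1, a1⟫ := by
      rw [← Complex.add_conj]
      exact hsum
    have h2 : ⟪a1, a1⟫ = ((‖a1‖ ^ 2 : ℝ) : ℂ) := by
      rw [inner_self_eq_norm_sq_to_K]
      norm_cast
    have h3 : (2 : ℝ) * s.re = ‖a1‖ ^ 2 := by exact_mod_cast h1.trans h2
    have h4 : ‖a2‖ = ‖a1‖ := by
      rw [ha2, norm_smul]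
      have hcn : ‖(starRingEnd ℂ) lam‖ = 1 := by rw [RCLike.norm_conj]; exact hnorm
      rw [hcn, one_mul]
    rw [h4]
    linarith
  have hqp : ∀ p : H, p ∈ K → q p = lam * ⟪a2, p⟫ := by
    intro p hp
    have h := hT.2 ((p : H), 0) ((0:H), 1)
    have hp0 : ((p, (0:ℂ)) : H × ℂ) = ((0:ℂ) • e + p, 0) := by simp
    rw [hTp p hp, hT01, hatA_pair he (K.smul_mem lam hp) ha1m] at h
    rw [hp0, h00, hatA_pair he hp K.zero_mem] at h
    simp only [inner_smul_right, inner_zero_left, map_one, map_zero] at h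
    have hgoal : ⟪a2, p⟫ = lam * ⟪a1, p⟫ := by
      rw [ha2, inner_smul_left, Complex.conj_conj]
    rw [hgoal]
    -- h : -0 * conj b - q p * conj lam + lam * ⟪a1,p⟫ = ...
    linear_combination (-lam) * h + (- q p) * hll
  -- the final formula
  refine ⟨hnorm, a2, s, ha2m, hsre, ?_⟩
  intro x z
  have hxz : ((x, z) : H × ℂ) = ⟪e, x⟫ • ((e, 0) : H × ℂ)
      + ((prjL e x, 0) : H × ℂ) + z • (((0:H), 1) : H × ℂ) := by
    refine Prod.ext ?_ (by simp)
    simp only [Prod.fst_add, Prod.smul_fst, Prod.smul_mk, smul_zero, smul_eq_mul]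
    have := prjL_decomp e x
    simpa using this
  have hb' : lam * s = b := by
    rw [hs]
    linear_combination b * hll
  have ha1' : a1 = lam • a2 := by
    rw [ha2, smul_smul, hll, one_smul]
  rw [hxz, map_add, map_add, map_smul, map_smul, hev, hTp _ (prjL_mem he x), hT01,
    hqp _ (prjL_mem he x), ← prjL_apply, ← hb', ha1']
  refine Prod.ext ?_ ?_
  · simp only [Prod.fst_add, Prod.smul_fst, Prod.smul_mk, Prod.mk_add_mk, smul_eq_mul,
      smul_zero, smul_add]
    match_scalars <;> ring
  · simp [mul_comm]

end Key

section Main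

open ContinuousLinearMap

variable {H : Type*} [NormedAddCommGroup H] [InnerProductSpace ℂ H] [CompleteSpace H]

local notation "⟪" x ", " y "⟫" => (inner ℂ x y : ℂ)

lemma conj_spectrum (R : (H × ℂ) ≃L[ℂ] (H × ℂ)) (S : (H × ℂ) →L[ℂ] (H × ℂ)) :
    spectrum ℂ ((R : (H × ℂ) →L[ℂ] (H × ℂ)) ∘L S ∘L (R.symm : (H × ℂ) →L[ℂ] (H × ℂ)))
      = spectrum ℂ S := by
  have h : (R : (H × ℂ) →L[ℂ] (H × ℂ)) ∘L S ∘L (R.symm : (H × ℂ) →L[ℂ] (H × ℂ))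
      = ↑R.toUnit * S * ↑R.toUnit⁻¹ := rfl
  rw [h, spectrum.units_conjugate]

lemma main_theorem
    (e : H) (he : ‖e‖ = 1) (lam : ℂ)
    (S : (H × ℂ) →L[ℂ] (H × ℂ)) (hS : memGhat e S)
    (hpar : (¬ ∃ v : H × ℂ, v ≠ 0 ∧ (∃ μ : ℂ, S v = μ • v) ∧
      ∃ c : ℝ, c < 0 ∧ hatA e v v = (c : ℂ)) ∧
    (∃ v : H × ℂ, v ≠ 0 ∧ (∃ μ : ℂ, S v = μ • v) ∧ hatA e v v = 0 ∧
      ∀ w : H × ℂ, w ≠ 0 → (∃ μ : ℂ, S w = μ • w) → hatA e w w = 0 →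
        ∃ c : ℂ, w = c • v))
    (hspec : spectrum ℂ S = {lam}) :
    ‖lam‖ = 1 ∧
    ∃ R : (H × ℂ) ≃L[ℂ] (H × ℂ), memGhat e (R : (H × ℂ) →L[ℂ] (H × ℂ)) ∧
      ∃ (a' : H) (s : ℂ), a' ∈ (ℂ ∙ e)ᗮ ∧ s ≠ 0 ∧ s.re = (1 / 2) * ‖a'‖ ^ 2 ∧
        (‖lam‖ = 1 ∧ a' ∈ (ℂ ∙ e)ᗮ ∧ s ≠ 0 ∧ s.re = (1 / 2) * ‖a'‖ ^ 2 ∧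
          memGhat e (R.toContinuousLinearMap ∘L S ∘L R.symm.toContinuousLinearMap) ∧
          ∀ (x : H) (z : ℂ),
            (R.toContinuousLinearMap ∘L S ∘L R.symm.toContinuousLinearMap) (x, z) = lam •
              (((((inner ℂ e x : ℂ) + (inner ℂ a' (x - (inner ℂ e x : ℂ) • e) : ℂ) + s * z) • e
              + (x - (inner ℂ e x : ℂ) • e) + z • a', z)) : H × ℂ)) := by
  obtain ⟨hno, v, hv0, ⟨μ, hμ⟩, hnull, huniq⟩ := hpar
  have hμlam : μ = lam := by
    have hmem : μ ∈ spectrum ℂ S := by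
      rw [spectrum.mem_iff]
      intro hunit
      rw [ContinuousLinearMap.isUnit_iff_bijective] at hunit
      apply hv0
      apply hunit.injective (a₁ := v) (a₂ := 0)
      simp [ContinuousLinearMap.sub_apply, Algebra.algebraMap_eq_smul_one, hμ]
    rw [hspec] at hmem
    exact hmem
  rw [hμlam] at hμ
  -- construct R
  have hRgood : ∃ R : (H × ℂ) ≃L[ℂ] (H × ℂ), memGhat e (R : (H × ℂ) →L[ℂ] (H × ℂ)) ∧
      (R.toContinuousLinearMap ∘L S ∘L R.symm.toContinuousLinearMap) (e, 0)
        = lam • ((e, 0) : H × ℂ) := by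
    by_cases hz : v.2 = 0
    · refine ⟨ContinuousLinearEquiv.refl ℂ (H × ℂ), ?_, ?_⟩
      · exact ⟨Function.bijective_id, fun u w => rfl⟩
      · -- v = c • (e, 0)
        have hv1 : v = (v.1, 0) := by rw [← hz]
        have hva : hatA e v v = 0 := hnull
        set c := ⟪e, v.1⟫ with hcdef
        have hd : v.1 = c • e + prjL e v.1 := prjL_decomp e v.1
        have hsplit : v = (c • e + prjL e v.1, 0) := by rw [hv1]; exact Prod.ext hd rfl
        rw [hsplit, hatA_pair he (prjL_mem he v.1) (prjL_mem he v.1)] at hva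
        simp only [map_zero, mul_zero, zero_mul, neg_zero, zero_add, add_zero] at hva
        have hx'0 : prjL e v.1 = 0 := by
          have h5 : ⟪prjL e v.1, prjL e v.1⟫ = 0 := by linear_combination hva
          exact inner_self_eq_zero.mp h5
        have hc0 : c ≠ 0 := by
          intro h0
          apply hv0
          rw [hsplit, hx'0, h0]
          simp
        have hveq : v = c • ((e, 0) : H × ℂ) := by
          rw [hsplit, hx'0]
          refine Prod.ext (by simp) (by simp)
        have hS2 : S (c • ((e, 0) : H × ℂ)) = lam • (c • ((e, 0) : H × ℂ)) := by
          rw [← hveq, hμ]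
        rw [map_smul] at hS2
        have hS3 : S ((e, 0) : H × ℂ) = lam • ((e, 0) : H × ℂ) := by
          apply smul_right_injective (H × ℂ) hc0
          show c • S ((e, 0) : H × ℂ) = c • (lam • ((e, 0) : H × ℂ))
          rw [hS2, smul_comm]
        simpa using hS3
    · -- normalize v
      set x := v.2⁻¹ • v.1 with hx
      have hw : ((x, 1) : H × ℂ) = v.2⁻¹ • v := by
        refine Prod.ext rfl ?_
        simp [inv_mul_cancel₀ hz]
      have hSw : S ((x, 1) : H × ℂ) = lam • ((x, 1) : H × ℂ) := by
        rw [hw, map_smul, hμ, smul_comm]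
      have hnw : hatA e ((x, 1) : H × ℂ) ((x, 1) : H × ℂ) = 0 := by
        rw [hw, hatA_smul_left, hatA_smul_right, hnull]
        ring
      set α := ⟪e, x⟫ with hα
      set x' := prjL e x with hx'
      have hx'm : x' ∈ (ℂ ∙ e)ᗮ := prjL_mem he x
      have hxd : x = α • e + x' := prjL_decomp e x
      have hsplit : ((x, 1) : H × ℂ) = (α • e + x', 1) := by
        refine Prod.ext hxd rfl
      rw [hsplit, hatA_pair he hx'm hx'm] at hnw
      simp only [map_one, mul_one] at hnw
      have ham : ⟪e, -x'⟫ = 0 := by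
        rw [inner_neg_right, inner_e_of_mem hx'm, neg_zero]
      have hs0 : (⟪x', x'⟫ - α) + (starRingEnd ℂ) (⟪x', x'⟫ - α) = ⟪-x', -x'⟫ := by
        rw [inner_neg_neg]
        have hcx : (starRingEnd ℂ) ⟪x', x'⟫ = ⟪x', x'⟫ := inner_conj_symm x' x'
        rw [map_sub, hcx]
        linear_combination hnw
      set N := transE e (-x') (⟪x', x'⟫ - α) he ham hs0 with hN
      set R := N.trans (iotaE e he) with hR
      have hRmem : memGhat e (R : (H × ℂ) →L[ℂ] (H × ℂ)) := by
        constructor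
        · exact R.bijective
        · intro u w
          have h1 : ∀ p : H × ℂ, (R : (H × ℂ) →L[ℂ] (H × ℂ)) p
              = iotaL e (transL e (-x') (⟪x', x'⟫ - α) p) := fun p => rfl
          obtain ⟨-, hio⟩ := memGhat_iotaL e he
          obtain ⟨-, htr⟩ := memGhat_transL e (-x') (⟪x', x'⟫ - α) he ham hs0
          rw [h1, h1, hio, htr]
      have hNw : transL e (-x') (⟪x', x'⟫ - α) ((x, 1) : H × ℂ) = ((0 : H), 1) := by
        rw [transL_apply]
        refine Prod.ext ?_ rfl
        have hax : ⟪-x', x⟫ = -⟪x', x'⟫ := by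
          rw [hxd, inner_neg_left, inner_add_right, inner_smul_right,
            inner_of_mem_e hx'm]
          ring
        rw [hax, hxd]
        match_scalars <;> ring
      have hRw : R ((x, 1) : H × ℂ) = ((e, 0) : H × ℂ) := by
        have h1 : R ((x, 1) : H × ℂ) = iotaL e (transL e (-x') (⟪x', x'⟫ - α) ((x, 1) : H × ℂ)) := rfl
        rw [h1, hNw, iotaL_apply]
        simp
      refine ⟨R, hRmem, ?_⟩
      have hsymm : R.symm ((e, 0) : H × ℂ) = ((x, 1) : H × ℂ) := by
        rw [← hRw, ContinuousLinearEquiv.symm_apply_apply]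
      calc (R.toContinuousLinearMap ∘L S ∘L R.symm.toContinuousLinearMap) ((e, 0) : H × ℂ)
          = R (S (R.symm ((e, 0) : H × ℂ))) := rfl
      _ = R (S ((x, 1) : H × ℂ)) := by rw [hsymm]
      _ = R (lam • ((x, 1) : H × ℂ)) := by rw [hSw]
      _ = lam • R ((x, 1) : H × ℂ) := map_smul _ _ _
      _ = lam • ((e, 0) : H × ℂ) := by rw [hRw]
  obtain ⟨R, hRmem, hTev⟩ := hRgood
  set T := R.toContinuousLinearMap ∘L S ∘L R.symm.toContinuousLinearMap with hT
  have hTmem : memGhat e T := by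
    rw [hT]
    exact memGhat_comp hRmem (memGhat_comp hS (memGhat_symm R hRmem))
  have hTspec : spectrum ℂ T = {lam} := by
    rw [hT, conj_spectrum, hspec]
  obtain ⟨hn1, a2, s, ha2m, hsre, hform⟩ := key e he lam T hTmem hTspec hTev
  have hsne : s ≠ 0 := by
    intro hs0
    have ha20 : a2 = 0 := by
      rw [hs0] at hsre
      have : ‖a2‖ = 0 := by
        simp only [Complex.zero_re] at hsre
        nlinarith [norm_nonneg a2]
      exact norm_eq_zero.mp this
    have hTid : ∀ u : H × ℂ, T u = lam • u := by
      intro u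
      have h2 := hform u.1 u.2
      rw [ha20, hs0] at h2
      have h3 : T (u.1, u.2) = lam • ((u.1, u.2) : H × ℂ) := by
        rw [h2]
        congr 1
        refine Prod.ext ?_ rfl
        simp only [inner_zero_left, smul_zero, add_zero, mul_zero, zero_mul, zero_smul]
        match_scalars <;> ring
      exact h3
    have hSid : ∀ u : H × ℂ, S u = lam • u := by
      intro u
      apply R.injective
      have h1 : R (S u) = T (R u) := by
        rw [hT]
        show R (S u) = R (S (R.symm (R u)))
        rw [ContinuousLinearEquiv.symm_apply_apply]
      rw [h1, hTid, map_smul]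
    apply hno
    refine ⟨((e, 1) : H × ℂ), ?_, ⟨lam, hSid _⟩, ⟨-2, by norm_num, ?_⟩⟩
    · intro h0
      have h2 := congrArg Prod.snd h0
      simp only [Prod.snd_zero] at h2
      exact one_ne_zero h2
    · have hsp : ((e, 1) : H × ℂ) = ((1 : ℂ) • e + 0, 1) := by simp
      rw [hsp, hatA_pair he (Submodule.zero_mem _) (Submodule.zero_mem _)]
      simp
      norm_num
  exact ⟨hn1, R, hRmem, a2, s, ha2m, hsne, hsre,
    hn1, ha2m, hsne, hsre, hTmem, hform⟩

end Main

section
variable {H : Type*} [NormedAddCommGroup H] [InnerProductSpace ℂ H] [CompleteSpace H]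

/-- a parabolic element of `Ĝ` with singleton spectrum `{λ}` has
`|λ| = 1` and is conjugate in `Ĝ` to a Heisenberg translation `(λ, a', s)`. -/
theorem parabolic_singleton_spectrum_conj_heisenberg
    (e : H) (he : ‖e‖ = 1) (lam : ℂ)
    (S : (H × ℂ) →L[ℂ] (H × ℂ)) (hS : memGhat e S)
    (hpar : IsParabolicGhat e S)
    (hspec : spectrum ℂ S = {lam}) :
    ‖lam‖ = 1 ∧
    ∃ R : (H × ℂ) ≃L[ℂ] (H × ℂ), memGhat e (R : (H × ℂ) →L[ℂ] (H × ℂ)) ∧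
      ∃ (a' : H) (s : ℂ), a' ∈ (ℂ ∙ e)ᗮ ∧ s ≠ 0 ∧ s.re = (1 / 2) * ‖a'‖ ^ 2 ∧
        IsHeisenberg e
          (R.toContinuousLinearMap ∘L S ∘L R.symm.toContinuousLinearMap) lam a' s := by
  exact main_theorem e he lam S hS hpar hspec

end
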